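/- Along the positive branch ς¹(q, σ) of ς³ + (1 - k·q)·ς² = σ (σ > 0, 0 < k < 1/3), the function ς̄¹(q) = ς¹(q, σ) - q/3 has derivative dς̄¹/dq = -((1 - 3k)·(ς¹)³ + 2σ)/(3·((ς¹)³ + 2σ)), which is strictly negative; hence ς̄¹ is strictly decreasing in q. -/

import Mathlib

open Set Filter

theorem stmt_13 (k σ : ℝ) (hk : 0 < k) (hk' : k < 1/3) (hσ : 0 < σ)
    (ς₁ : ℝ → ℝ)
    (hpos : ∀ q, 0 < ς₁ q)
    (hroot : ∀ q, (ς₁ q)^3 + (1 - k*q)*(ς₁ q)^2 - σ = 0) :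
    (∀ q, HasDerivAt (fun q => ς₁ q - q/3)
        (-((1 - 3*k)*(ς₁ q)^3 + 2*σ) / (3*((ς₁ q)^3 + 2*σ))) q ∧
      -((1 - 3*k)*(ς₁ q)^3 + 2*σ) / (3*((ς₁ q)^3 + 2*σ)) < 0) ∧
    StrictAnti (fun q => ς₁ q - q/3) := by
  set g : ℝ → ℝ := fun ς => (ς + 1 - σ * (ς^2)⁻¹) / k with hg
  -- g is a left inverse of ς₁
  have hginv : ∀ q, g (ς₁ q) = q := by
    intro q
    have h := hroot q
    have hc := hpos q
    have h2 : (ς₁ q)^2 ≠ 0 := by positivity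
    simp only [hg]
    field_simp
    nlinarith [h]
  -- g is strictly monotone on positives
  have hgmono : ∀ a b : ℝ, 0 < a → 0 < b → a < b → g a < g b := by
    intro a b ha hb hab
    have h2a : (0:ℝ) < a^2 := by positivity
    have h2b : (0:ℝ) < b^2 := by positivity
    have hinv : (b^2)⁻¹ < (a^2)⁻¹ := by
      rw [inv_lt_inv₀ h2b h2a]
      nlinarith
    have hlt : a + 1 - σ * (a^2)⁻¹ < b + 1 - σ * (b^2)⁻¹ := by nlinarith
    exact div_lt_div_of_pos_right hlt hk
  -- hence ς₁ is monotone
  have hmono : Monotone ς₁ := by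
    intro a b hab
    by_contra h
    push_neg at h
    have := hgmono _ _ (hpos b) (hpos a) h
    rw [hginv, hginv] at this
    linarith
  -- range of ς₁ contains Ioi 0
  have hrange : Ioi (0:ℝ) ⊆ ς₁ '' univ := by
    rintro c hc
    refine ⟨g c, mem_univ _, ?_⟩
    -- g (ς₁ (g c)) = g c and g injective on positives
    have h1 : g (ς₁ (g c)) = g c := hginv (g c)
    rcases lt_trichotomy (ς₁ (g c)) c with h | h | h
    · exact absurd h1 (ne_of_lt (hgmono _ _ (hpos _) hc h))
    · exact h
    · exact absurd h1 (ne_of_gt (hgmono _ _ hc (hpos _) h))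
  -- continuity of ς₁
  have hcont : ∀ q, ContinuousAt ς₁ q := by
    intro a
    exact continuousAt_of_monotoneOn_of_image_mem_nhds
      (fun x _ y _ hxy => hmono hxy) univ_mem
      (mem_of_superset (Ioi_mem_nhds (hpos a)) hrange)
  -- main derivative computation
  have key : ∀ q, HasDerivAt (fun q => ς₁ q - q/3)
      (-((1 - 3*k)*(ς₁ q)^3 + 2*σ) / (3*((ς₁ q)^3 + 2*σ))) q := by
    intro q
    set c := ς₁ q with hc
    have hcpos : 0 < c := hpos q
    have hc2 : (c^2) ≠ 0 := by positivity
    have h1 : HasDerivAt (fun ς : ℝ => ς^2) (2*c) c := by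
      simpa using hasDerivAt_pow 2 c
    have h2 : HasDerivAt (fun ς : ℝ => (ς^2)⁻¹) (-(2*c) / (c^2)^2) c := h1.inv hc2
    have h3 : HasDerivAt g ((1 - σ * (-(2*c) / (c^2)^2)) / k) c := by
      have := (((hasDerivAt_id c).add_const 1).sub (h2.const_mul σ)).div_const k
      simpa [hg] using this
    have hd : (1 - σ * (-(2*c) / (c^2)^2)) / k = (c^3 + 2*σ) / (k * c^3) := by
      field_simp
      ring
    rw [hd] at h3
    have hden : (0:ℝ) < c^3 + 2*σ := by positivity
    have hdne : (c^3 + 2*σ) / (k * c^3) ≠ 0 := by positivity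
    have h4 : HasDerivAt ς₁ (((c^3 + 2*σ) / (k * c^3))⁻¹) q :=
      HasDerivAt.of_local_left_inverse (hcont q) h3 hdne (Eventually.of_forall hginv)
    have h5 : HasDerivAt (fun q => ς₁ q - q/3)
        ((((c^3 + 2*σ) / (k * c^3))⁻¹) - 1/3) q :=
      h4.sub ((hasDerivAt_id q).div_const 3)
    have heq : (((c^3 + 2*σ) / (k * c^3))⁻¹) - 1/3
        = -((1 - 3*k)*c^3 + 2*σ) / (3*(c^3 + 2*σ)) := by
      rw [inv_div]
      field_simp
      ring
    rwa [heq] at h5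
  have hneg : ∀ q, -((1 - 3*k)*(ς₁ q)^3 + 2*σ) / (3*((ς₁ q)^3 + 2*σ)) < 0 := by
    intro q
    have hcpos : 0 < ς₁ q := hpos q
    have hnum : 0 < (1 - 3*k)*(ς₁ q)^3 + 2*σ := by nlinarith [pow_pos hcpos 3]
    have hden : (0:ℝ) < 3*((ς₁ q)^3 + 2*σ) := by positivity
    exact div_neg_of_neg_of_pos (by linarith) hden
  exact ⟨fun q => ⟨key q, hneg q⟩,
    strictAnti_of_hasDerivAt_neg key hneg⟩
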